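/- Let γ be a real-valued random variable satisfying a ≤ γ ≤ b almost surely, where 0 < a < b. Then equality holds in the inequality E[1/γ] ≤ ((b/a + a/b + 2)/4) · (1 / E[γ]) if and only if P(γ = a) = P(γ = b) = 1/2. -/

import Mathlib

open MeasureTheory

lemma two_point_integral {Ω : Type*} [MeasurableSpace Ω] (P : Measure Ω) [IsFiniteMeasure P]
    {A B : Set Ω} (hA : MeasurableSet A) (hB : MeasurableSet B) (hdisj : Disjoint A B)
    (hfull : P ((A ∪ B)ᶜ) = 0) (f : Ω → ℝ) (c d : ℝ)
    (hfc : ∀ ω ∈ A, f ω = c) (hfd : ∀ ω ∈ B, f ω = d) :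
    ∫ ω, f ω ∂P = c * (P A).toReal + d * (P B).toReal := by
  have hmem : ∀ᵐ ω ∂P, ω ∈ A ∪ B := by
    rw [ae_iff]
    simpa [Set.compl_def] using hfull
  have hae : f =ᵐ[P] fun ω => A.indicator (fun _ => c) ω + B.indicator (fun _ => d) ω := by
    filter_upwards [hmem] with ω hω
    rcases hω with h | h
    · have hnb : ω ∉ B := fun hb => hdisj.le_bot ⟨h, hb⟩ |>.elim
      simp [Set.indicator_of_mem h, Set.indicator_of_notMem hnb, hfc ω h]
    · have hna : ω ∉ A := fun hA' => hdisj.le_bot ⟨hA', h⟩ |>.elim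
      simp [Set.indicator_of_notMem hna, Set.indicator_of_mem h, hfd ω h]
  rw [integral_congr_ae hae, integral_add ((integrable_const c).indicator hA)
      ((integrable_const d).indicator hB)]
  rw [integral_indicator_const c hA, integral_indicator_const d hB]
  simp [smul_eq_mul]; simp only [Measure.real]; ring

theorem stmt_9 {Ω : Type*} [MeasurableSpace Ω] (P : Measure Ω) [IsProbabilityMeasure P]
    (a b : ℝ) (ha : 0 < a) (hab : a < b)
    (γ : Ω → ℝ) (hγ : Measurable γ)
    (hbd : ∀ᵐ ω ∂P, γ ω ∈ Set.Icc a b) :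
    (∫ ω, 1 / γ ω ∂P = (b/a + a/b + 2)/4 * (1 / ∫ ω, γ ω ∂P)) ↔
      (P {ω | γ ω = a} = 1/2 ∧ P {ω | γ ω = b} = 1/2) := by
  have hb : 0 < b := ha.trans hab
  have hane : a ≠ 0 := ha.ne'
  have hbne : b ≠ 0 := hb.ne'
  set A := {ω | γ ω = a} with hAdef
  set B := {ω | γ ω = b} with hBdef
  have hAm : MeasurableSet A := hγ (measurableSet_singleton a)
  have hBm : MeasurableSet B := hγ (measurableSet_singleton b)
  have hdisj : Disjoint A B := by
    rw [Set.disjoint_left]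
    intro ω h1 h2
    exact hab.ne (h1.symm.trans h2)
  -- integrability
  have hintγ : Integrable γ P := by
    refine (integrable_const b).mono' hγ.aestronglyMeasurable ?_
    filter_upwards [hbd] with ω hω
    rw [Real.norm_eq_abs, abs_le]
    exact ⟨le_trans (by linarith) hω.1, hω.2⟩
  have hintinv : Integrable (fun ω => 1 / γ ω) P := by
    refine (integrable_const (1/a)).mono' ?_ ?_
    · exact (hγ.inv.const_mul 1).aestronglyMeasurable |>.congr (by
        filter_upwards with ω; rw [one_mul, one_div, Pi.inv_apply])
    · filter_upwards [hbd] with ω hω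
      have hγpos : 0 < γ ω := ha.trans_le hω.1
      rw [Real.norm_eq_abs, abs_of_pos (by positivity)]
      exact one_div_le_one_div_of_le ha hω.1
  set m := ∫ ω, γ ω ∂P with hmdef
  have hma : a ≤ m := by
    have : ∫ _ω, a ∂P ≤ m := integral_mono_ae (integrable_const a) hintγ
      (by filter_upwards [hbd] with ω hω using hω.1)
    simpa using this
  have hmb : m ≤ b := by
    have : m ≤ ∫ _ω, b ∂P := integral_mono_ae hintγ (integrable_const b)
      (by filter_upwards [hbd] with ω hω using hω.2)
    simpa using this
  have hmpos : 0 < m := ha.trans_le hma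
  -- integral of the gap function
  set g := fun ω => (a + b - γ ω)/(a*b) - 1/γ ω with hgdef
  have hint0 : Integrable (fun ω => a + b - γ ω) P := (integrable_const (a+b)).sub hintγ
  have hint1 : Integrable (fun ω => (a + b - γ ω)/(a*b)) P := hint0.div_const _
  have hintg : Integrable g P := hint1.sub hintinv
  have hgint : ∫ ω, g ω ∂P = (a + b - m)/(a*b) - ∫ ω, 1/γ ω ∂P := by
    have h1 : ∫ ω, (a + b - γ ω)/(a*b) ∂P = (a + b - m)/(a*b) := by
      rw [integral_div, integral_sub (integrable_const (a+b)) hintγ, integral_const]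
      simp [hmdef]
    calc ∫ ω, g ω ∂P = (∫ ω, (a + b - γ ω)/(a*b) ∂P) - ∫ ω, 1/γ ω ∂P :=
          integral_sub hint1 hintinv
      _ = _ := by rw [h1]
  have hgnn : ∀ᵐ ω ∂P, 0 ≤ g ω := by
    filter_upwards [hbd] with ω hω
    have hγpos : 0 < γ ω := ha.trans_le hω.1
    rw [hgdef, sub_nonneg, div_le_div_iff₀ hγpos (by positivity)]
    nlinarith [mul_nonneg (sub_nonneg.mpr hω.1) (sub_nonneg.mpr hω.2)]
  constructor
  · intro heq
    -- upper bound step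
    have hC : (b/a + a/b + 2)/4 * (1/m) = (a+b)^2/(4*(a*b)) / m := by
      field_simp; ring
    have hub : (a + b - m)/(a*b) ≤ (a+b)^2/(4*(a*b)) / m := by
      rw [div_le_div_iff₀ (by positivity) hmpos]
      have h4 : (a+b)^2/(4*(a*b)) * (a*b) = (a+b)^2/4 := by field_simp
      rw [h4]
      nlinarith [sq_nonneg (a + b - 2*m)]
    have hgnn' : 0 ≤ ∫ ω, g ω ∂P := integral_nonneg_of_ae hgnn
    have hI : ∫ ω, 1/γ ω ∂P = (a+b)^2/(4*(a*b)) / m := by rw [heq, hC]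
    have hg0 : ∫ ω, g ω ∂P = 0 := le_antisymm (by rw [hgint, hI]; linarith) hgnn'
    have hmhalf : m = (a+b)/2 := by
      have h0 : (a + b - m)/(a*b) = (a+b)^2/(4*(a*b)) / m := by
        rw [hgint, hI] at hg0; linarith
      rw [div_eq_div_iff (by positivity) hmpos.ne'] at h0
      have h4 : (a+b)^2/(4*(a*b)) * (a*b) = (a+b)^2/4 := by field_simp
      rw [h4] at h0
      nlinarith [sq_nonneg (a + b - 2*m)]
    have hgz : g =ᵐ[P] 0 := (integral_eq_zero_iff_of_nonneg_ae hgnn hintg).mp hg0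
    have hmemae : ∀ᵐ ω ∂P, ω ∈ A ∪ B := by
      filter_upwards [hgz, hbd] with ω h0 hω
      have hγpos : 0 < γ ω := ha.trans_le hω.1
      have h0' : (a + b - γ ω)/(a*b) - 1/γ ω = 0 := h0
      rw [sub_eq_zero, div_eq_div_iff (by positivity) hγpos.ne'] at h0'
      have hz : (γ ω - a) * (b - γ ω) = 0 := by nlinarith [h0']
      rcases mul_eq_zero.mp hz with h | h
      · exact Or.inl (sub_eq_zero.mp h)
      · exact Or.inr (sub_eq_zero.mp h).symm
    have hfull : P ((A ∪ B)ᶜ) = 0 := by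
      rw [ae_iff] at hmemae
      simpa [Set.compl_def] using hmemae
    have hsumE : P A + P B = 1 := by
      rw [← measure_union hdisj hBm]
      exact (prob_compl_eq_zero_iff (hAm.union hBm)).mp hfull
    have hAfin : P A ≠ ⊤ := measure_ne_top P A
    have hBfin : P B ≠ ⊤ := measure_ne_top P B
    set pA := (P A).toReal with hpAdef
    set pB := (P B).toReal with hpBdef
    have hsum : pA + pB = 1 := by
      rw [hpAdef, hpBdef, ← ENNReal.toReal_add hAfin hBfin, hsumE, ENNReal.toReal_one]
    have hmval : m = a * pA + b * pB := by
      rw [hmdef]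
      exact two_point_integral P hAm hBm hdisj hfull γ a b (fun ω h => h) (fun ω h => h)
    have hpA : pA = 1/2 := by
      have key : (a - b) * (pA - 1/2) = 0 := by
        rw [hmhalf] at hmval; linear_combination -hmval - b * hsum
      rcases mul_eq_zero.mp key with h | h
      · exact absurd (sub_eq_zero.mp h) hab.ne
      · linarith [sub_eq_zero.mp h]
    have hpB : pB = 1/2 := by linarith
    constructor
    · rw [← ENNReal.ofReal_toReal hAfin, ← hpAdef, hpA]
      rw [ENNReal.ofReal_div_of_pos (by norm_num)]; norm_num
    · rw [← ENNReal.ofReal_toReal hBfin, ← hpBdef, hpB]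
      rw [ENNReal.ofReal_div_of_pos (by norm_num)]; norm_num
  · rintro ⟨hPA, hPB⟩
    have hunion : P (A ∪ B) = 1 := by
      rw [measure_union hdisj hBm, hPA, hPB, ENNReal.div_add_div_same,
        (show (1:ENNReal)+1 = 2 by norm_num), ENNReal.div_self (by norm_num) (by norm_num)]
    have hfull : P ((A ∪ B)ᶜ) = 0 := (prob_compl_eq_zero_iff (hAm.union hBm)).mpr hunion
    have htr : ((1:ENNReal)/2).toReal = 1/2 := by
      rw [ENNReal.toReal_div]; norm_num
    have hmval : m = a * (1/2) + b * (1/2) := by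
      rw [hmdef, two_point_integral P hAm hBm hdisj hfull γ a b (fun ω h => h) (fun ω h => h),
        hPA, hPB, htr]
    have hIval : ∫ ω, 1/γ ω ∂P = (1/a) * (1/2) + (1/b) * (1/2) := by
      rw [two_point_integral P hAm hBm hdisj hfull (fun ω => 1/γ ω) (1/a) (1/b)
        (fun ω h => by have h2 : γ ω = a := h; simp [h2])
        (fun ω h => by have h2 : γ ω = b := h; simp [h2]),
        hPA, hPB, htr]
    rw [hIval, hmval]
    have hs : a * (1/2) + b * (1/2) ≠ 0 := by positivity
    field_simp
    ring
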